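/- Let L be a first-order language with no relation symbols, let A be an L-structure, and let α, β be binary relations on A. If (a,c) and (b,d) both belong to Θ_A(α ∪ β), the smallest congruence of A containing α ∪ β, then ((a,b),(c,d)) belongs to Θ_{A^[2]}((α⊗α) ∪ (β⊗β)), the smallest congruence of the second matrix power A^[2] containing (α⊗α) ∪ (β⊗β). -/

import Mathlib

open FirstOrder FirstOrder.Language

/-- `α ⊗ β`: the binary relation on `A × A` relating `(a,b)` to `(c,d)` iff
`(a,c) ∈ α` and `(b,d) ∈ β`. -/
def otimes {A : Type*} (α β : Set (A × A)) : Set ((A × A) × (A × A)) :=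
  {p | (p.1.1, p.2.1) ∈ α ∧ (p.1.2, p.2.2) ∈ β}

/-- The `k`-ary operation `m_t` of the second matrix power `A^[2]`,
determined by a pair `t = (t₁, t₂)` of `L`-terms in `2k` variables
(the variables being indexed by `Fin k × Fin 2`, so that the variable `(j, i)`
receives the `i`-th coordinate of the `j`-th argument). -/
def mOp2 {L : FirstOrder.Language} {A : Type*} [L.Structure A] {k : ℕ}
    (t₁ t₂ : L.Term (Fin k × Fin 2)) (x : Fin k → A × A) : A × A :=
  (t₁.realize (fun p => ![(x p.1).1, (x p.1).2] p.2),
   t₂.realize (fun p => ![(x p.1).1, (x p.1).2] p.2))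

/-- A congruence of an `L`-structure `A`: an equivalence relation compatible
with every basic operation. -/
def IsCongruence (L : FirstOrder.Language) (A : Type*) [L.Structure A]
    (r : Set (A × A)) : Prop :=
  Equivalence (fun a b : A => (a, b) ∈ r) ∧
    ∀ (m : ℕ) (f : L.Functions m) (x y : Fin m → A),
      (∀ i, (x i, y i) ∈ r) →
        (Structure.funMap f x, Structure.funMap f y) ∈ r

/-- A congruence of the second matrix power `A^[2]`: an equivalence relation on
`A × A` compatible with every operation `m_t` (for every positive `k` and every
pair of terms in `2k` variables). -/
def IsCongruence2 (L : FirstOrder.Language) (A : Type*) [L.Structure A]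
    (r : Set ((A × A) × (A × A))) : Prop :=
  Equivalence (fun u v : A × A => (u, v) ∈ r) ∧
    ∀ (k : ℕ), 0 < k → ∀ (t₁ t₂ : L.Term (Fin k × Fin 2)) (x y : Fin k → A × A),
      (∀ j, (x j, y j) ∈ r) → (mOp2 t₁ t₂ x, mOp2 t₁ t₂ y) ∈ r


/-- The smallest congruence of `A` containing a binary relation `ρ`
(the congruence generated by `ρ`, `Θ_A(ρ)`). -/
def congClosure (L : FirstOrder.Language) (A : Type*) [L.Structure A]
    (ρ : Set (A × A)) : Set (A × A) :=
  {p | ∀ r : Set (A × A), IsCongruence L A r → ρ ⊆ r → p ∈ r}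

/-- The smallest congruence of the second matrix power `A^[2]` containing a
binary relation `ρ` on `A × A` (`Θ_{A^[2]}(ρ)`). -/
def congClosure2 (L : FirstOrder.Language) (A : Type*) [L.Structure A]
    (ρ : Set ((A × A) × (A × A))) : Set ((A × A) × (A × A)) :=
  {p | ∀ r : Set ((A × A) × (A × A)), IsCongruence2 L A r → ρ ⊆ r → p ∈ r}

/-- if `(a,c)` and `(b,d)` lie in `Θ_A(α ∪ β)`, then
`((a,b),(c,d))` lies in `Θ_{A^[2]}((α⊗α) ∪ (β⊗β))`. -/
theorem mem_congClosure2_of_mem_congClosure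
    (L : FirstOrder.Language) (A : Type*) [L.Structure A]
    (hrel : ∀ n : ℕ, IsEmpty (L.Relations n))
    (α β : Set (A × A)) (a b c d : A)
    (h1 : (a, c) ∈ congClosure L A (α ∪ β))
    (h2 : (b, d) ∈ congClosure L A (α ∪ β)) :
    ((a, b), (c, d)) ∈ congClosure2 L A (otimes α α ∪ otimes β β) := by
  intro r hr hsub
  obtain ⟨hEq, hOp⟩ := hr
  -- the "diagonal" relation on A
  set s : Set (A × A) := {p | ((p.1, p.1), (p.2, p.2)) ∈ r} with hs
  have hscong : IsCongruence L A s := by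
    refine ⟨⟨fun x => hEq.refl _, fun h => hEq.symm h, fun h1 h2 => hEq.trans h1 h2⟩, ?_⟩
    intro m f x y hxy
    rcases Nat.eq_zero_or_pos m with hm | hm
    · subst hm
      have : x = y := funext fun i => i.elim0
      subst this
      exact hEq.refl _
    · have := hOp m hm
        (Term.func f (fun i => Term.var (i, 0)))
        (Term.func f (fun i => Term.var (i, 0)))
        (fun i => (x i, x i)) (fun i => (y i, y i)) (fun i => hxy i)
      simpa [mOp2, Term.realize, hs] using this
  have hsubs : α ∪ β ⊆ s := by
    rintro ⟨x, y⟩ (hxy | hxy)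
    · exact hsub (Or.inl ⟨hxy, hxy⟩)
    · exact hsub (Or.inr ⟨hxy, hxy⟩)
  have ha : ((a, a), (c, c)) ∈ r := h1 s hscong hsubs
  have hb : ((b, b), (d, d)) ∈ r := h2 s hscong hsubs
  have hx : ∀ j : Fin 2,
      ((![(a, a), (b, b)] : Fin 2 → A × A) j, (![(c, c), (d, d)] : Fin 2 → A × A) j) ∈ r := by
    intro j
    fin_cases j
    · exact ha
    · exact hb
  have key := hOp 2 (by norm_num)
    (Term.var ((0 : Fin 2), (0 : Fin 2))) (Term.var ((1 : Fin 2), (1 : Fin 2)))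
    ![(a, a), (b, b)] ![(c, c), (d, d)] hx
  simpa [mOp2, Term.realize] using key
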